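/- Let V be a finite-dimensional real vector space of dimension N and W a k-dimensional linear subspace of the space of symmetric bilinear forms on V. Then Y_W^ns, with the subspace topology induced from V, is a topological manifold of dimension N − k: every point of Y_W^ns has an open neighborhood in Y_W^ns that is homeomorphic to an open subset of ℝ^{N−k}. -/

import Mathlib

open Module

/-- `Y_W^{ns}`: the vectors at which all forms of `W` vanish and which are not null vectors of
any nonzero form of `W`. -/
def YWns {V : Type*} [AddCommGroup V] [Module ℝ V]
    (W : Submodule ℝ (V →ₗ[ℝ] V →ₗ[ℝ] ℝ)) : Set V :=
  {v | (∀ w ∈ W, w v v = 0) ∧ ∀ w ∈ W, w ≠ 0 → ∃ u, w v u ≠ 0}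

/-- A family of linearly independent functionals gives a surjective map to `Fin k → ℝ`. -/
lemma surj_pi_of_indep {V : Type*} [AddCommGroup V] [Module ℝ V] {k : ℕ}
    (ℓ : Fin k → (V →ₗ[ℝ] ℝ)) (h : LinearIndependent ℝ ℓ) :
    Function.Surjective (LinearMap.pi ℓ : V →ₗ[ℝ] (Fin k → ℝ)) := by
  classical
  rw [← LinearMap.range_eq_top]
  by_contra hne
  obtain ⟨φ, hφ0, hker⟩ := (LinearMap.range (LinearMap.pi ℓ)).exists_le_ker_of_lt_top
    (lt_top_iff_ne_top.mpr hne)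
  set c : Fin k → ℝ := fun i => φ (fun j => if i = j then 1 else 0) with hc_def
  have hφ_eq : ∀ y : Fin k → ℝ, φ y = ∑ i, y i * c i := by
    intro y
    conv_lhs => rw [pi_eq_sum_univ y]
    rw [map_sum]
    simp [smul_eq_mul, hc_def]
  have hzero : ∑ i, c i • ℓ i = 0 := by
    ext u
    have h1 : φ (LinearMap.pi ℓ u) = 0 := hker ⟨u, rfl⟩
    rw [hφ_eq] at h1
    simpa [LinearMap.pi_apply, mul_comm] using h1
  have hc0 : ∀ i, c i = 0 := Fintype.linearIndependent_iff.mp h c hzero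
  apply hφ0
  apply LinearMap.ext
  intro y
  rw [hφ_eq]
  simp [hc0]

/-- Choose a linearly independent spanning family in the ambient module. -/
lemma exists_indep_span {M : Type*} [AddCommGroup M] [Module ℝ M] (W : Submodule ℝ M)
    [FiniteDimensional ℝ M] {k : ℕ} (h : Module.finrank ℝ W = k) :
    ∃ ℓ : Fin k → M, (∀ i, ℓ i ∈ W) ∧ LinearIndependent ℝ ℓ ∧
      ∀ w ∈ W, ∃ c : Fin k → ℝ, w = ∑ i, c i • ℓ i := by
  let bW : Basis (Fin k) ℝ W := (Module.finBasis ℝ W).reindex (finCongr h)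
  refine ⟨fun i => (bW i : M), fun i => (bW i).2,
    bW.linearIndependent.map' W.subtype (Submodule.ker_subtype W), ?_⟩
  intro w hw
  refine ⟨fun i => bW.repr ⟨w, hw⟩ i, ?_⟩
  have h1 := congrArg (W.subtype) (bW.sum_repr ⟨w, hw⟩)
  rw [map_sum] at h1
  simpa using h1.symm

set_option maxHeartbeats 1000000 in
theorem YWns_is_topological_manifold
    {V : Type*} [NormedAddCommGroup V] [NormedSpace ℝ V] [FiniteDimensional ℝ V]
    (N k : ℕ) (hN : finrank ℝ V = N)
    (W : Submodule ℝ (V →ₗ[ℝ] V →ₗ[ℝ] ℝ))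
    (hsymm : ∀ w ∈ W, ∀ u v : V, w u v = w v u)
    (hdimW : finrank ℝ W = k) :
    ∀ x : YWns W, ∃ U : Set (YWns W), IsOpen U ∧ x ∈ U ∧
      ∃ O : Set (EuclideanSpace ℝ (Fin (N - k))), IsOpen O ∧ Nonempty (U ≃ₜ O) := by
  classical
  haveI : CompleteSpace V := FiniteDimensional.complete ℝ V
  intro x
  obtain ⟨a, ha⟩ := x
  -- independent spanning family of W
  obtain ⟨ℓ, hℓW, hℓind, hcomb⟩ := exists_indep_span (M := V →ₗ[ℝ] V →ₗ[ℝ] ℝ) W hdimW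
  have hspan : ∀ v : V, (∀ i, ℓ i v v = 0) → ∀ w ∈ W, w v v = 0 := by
    intro v hv w hw
    obtain ⟨c, rfl⟩ := hcomb w hw
    simp [LinearMap.sum_apply, hv]
  -- characterization of the non-null condition via linear independence
  have hNNiff : ∀ v : V, (∀ w ∈ W, w ≠ 0 → ∃ u, w v u ≠ 0) ↔
      LinearIndependent ℝ (fun i => ℓ i v) := by
    intro v
    constructor
    · intro hv
      rw [Fintype.linearIndependent_iff]
      intro c hc
      have hwW : (∑ i, c i • ℓ i) ∈ W := Submodule.sum_mem _ fun i _ =>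
        Submodule.smul_mem _ _ (hℓW i)
      have hw0 : (∑ i, c i • ℓ i) = 0 := by
        by_contra hne
        obtain ⟨u, hu⟩ := hv _ hwW hne
        apply hu
        have h2 := LinearMap.congr_fun hc u
        simpa [LinearMap.sum_apply] using h2
      exact Fintype.linearIndependent_iff.mp hℓind c hw0
    · intro hind w hw hne
      by_contra hu
      push_neg at hu
      obtain ⟨c, rfl⟩ := hcomb w hw
      have hc : (∑ i, c i • ℓ i) v = 0 := by
        ext u
        simpa [LinearMap.sum_apply] using hu u
      have hc' : ∑ i, c i • (ℓ i v) = 0 := by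
        simpa [LinearMap.sum_apply] using hc
      have hc0 : ∀ i, c i = 0 := Fintype.linearIndependent_iff.mp hind c hc'
      apply hne
      simp [hc0]
  -- the open set of non-null points
  let e : (V →ₗ[ℝ] ℝ) ≃ₗ[ℝ] (V →L[ℝ] ℝ) := LinearMap.toContinuousLinearMap
  have hindiff : ∀ g : Fin k → (V →ₗ[ℝ] ℝ),
      LinearIndependent ℝ (fun i => e (g i)) ↔ LinearIndependent ℝ g := by
    intro g
    rw [show (fun i => e (g i)) = e.toLinearMap ∘ g from rfl]
    exact (e.toLinearMap.linearIndependent_iff (LinearEquiv.ker e)) 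
  let Lmap : V →ₗ[ℝ] (Fin k → (V →L[ℝ] ℝ)) := LinearMap.pi fun i => e.toLinearMap ∘ₗ (ℓ i)
  let Sns : Set V := ⇑Lmap ⁻¹' {g | LinearIndependent ℝ g}
  have hSns_open : IsOpen Sns :=
    isOpen_setOf_linearIndependent.preimage Lmap.continuous_of_finiteDimensional
  have hSns_iff : ∀ v, v ∈ Sns ↔ LinearIndependent ℝ (fun i => ℓ i v) := by
    intro v
    have : Lmap v = fun i => e (ℓ i v) := rfl
    simp only [Sns, Set.mem_preimage, this, Set.mem_setOf_eq]
    exact hindiff _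
  -- the bilinear map B
  let B1 : V →ₗ[ℝ] V →ₗ[ℝ] (Fin k → ℝ) :=
    LinearMap.mk₂ ℝ (fun u v i => ℓ i u v)
      (fun u u' v => by funext i; simp)
      (fun c u v => by funext i; simp)
      (fun u v v' => by funext i; simp)
      (fun c u v => by funext i; simp)
  let B2 : V →ₗ[ℝ] (V →L[ℝ] (Fin k → ℝ)) :=
    { toFun := fun u => LinearMap.toContinuousLinearMap (B1 u)
      map_add' := fun u u' => by ext v; simp
      map_smul' := fun c u => by ext v; simp }
  let B : V →L[ℝ] V →L[ℝ] (Fin k → ℝ) := LinearMap.toContinuousLinearMap B2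
  have hBapp : ∀ u v : V, B u v = fun i => ℓ i u v := fun u v => rfl
  -- the defining function and its derivative
  let f : V → (Fin k → ℝ) := fun v => B v v
  have hf0iff : ∀ v : V, f v = 0 ↔ ∀ w ∈ W, w v v = 0 := by
    intro v
    constructor
    · intro h
      exact hspan v (fun i => congrFun h i)
    · intro h
      funext i
      exact h _ (hℓW i)
  let idV : V →L[ℝ] V := ContinuousLinearMap.id ℝ V
  let f' : V →L[ℝ] (Fin k → ℝ) := B.precompR V (a) idV + B.precompL V idV (a)
  have hf : HasStrictFDerivAt f f' a :=
    B.hasStrictFDerivAt_of_bilinear (hasStrictFDerivAt_id a) (hasStrictFDerivAt_id a)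
  have hf'app : ∀ u : V, f' u = fun i => ℓ i a u + ℓ i u a := by
    intro u
    funext i
    simp [f', ContinuousLinearMap.precompR, ContinuousLinearMap.precompL, hBapp, idV]
  -- independence at a
  have hind : LinearIndependent ℝ (fun i => ℓ i a) := (hNNiff a).1 ha.2
  have haSns : a ∈ Sns := (hSns_iff a).2 hind
  -- surjectivity of the derivative
  have hsurjΦ := surj_pi_of_indep (fun i => ℓ i a) hind
  have hsurj : LinearMap.range (f' : V →ₗ[ℝ] (Fin k → ℝ)) = ⊤ := by
    rw [LinearMap.range_eq_top]
    intro c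
    obtain ⟨u, hu⟩ := hsurjΦ ((2⁻¹ : ℝ) • c)
    refine ⟨u, ?_⟩
    rw [ContinuousLinearMap.coe_coe, hf'app u]
    funext i
    have h1 : ℓ i a u = 2⁻¹ * c i := by
      have := congrFun hu i
      simpa [LinearMap.pi_apply] using this
    have h2 : ℓ i u a = ℓ i a u := hsymm (ℓ i) (hℓW i) u a
    rw [h2, h1]
    ring
  -- implicit function theorem
  let φmap := hf.implicitToOpenPartialHomeomorph f f' hsurj
  have hφfst : ∀ v : V, (φmap v).1 = f v := fun v => rfl
  have haφ : a ∈ φmap.source := hf.mem_implicitToOpenPartialHomeomorph_source hsurj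
  let ψ := φmap.restrOpen Sns hSns_open
  have hψcoe : ⇑ψ = ⇑φmap := rfl
  have hψsymmcoe : ⇑ψ.symm = ⇑φmap.symm := rfl
  have hψsource : ψ.source = φmap.source ∩ Sns := rfl
  have haψ : a ∈ ψ.source := ⟨haφ, haSns⟩
  -- dimension of the kernel
  have hrank : finrank ℝ (LinearMap.ker (f' : V →ₗ[ℝ] (Fin k → ℝ))) = N - k := by
    have h1 := LinearMap.finrank_range_add_finrank_ker (f' : V →ₗ[ℝ] (Fin k → ℝ))
    have h2 : LinearMap.range (f' : V →ₗ[ℝ] (Fin k → ℝ)) = ⊤ := hsurj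
    rw [h2, finrank_top, Module.finrank_fin_fun, hN] at h1
    have h3 : LinearMap.ker (f' : V →ₗ[ℝ] (Fin k → ℝ)) = LinearMap.ker (f' : V →ₗ[ℝ] (Fin k → ℝ)) := rfl
    rw [h3] at h1
    omega
  let eK : (LinearMap.ker (f' : V →ₗ[ℝ] (Fin k → ℝ))) ≃L[ℝ] EuclideanSpace ℝ (Fin (N - k)) :=
    ContinuousLinearEquiv.ofFinrankEq (by rw [hrank, finrank_euclideanSpace_fin])
  -- the open sets
  let U : Set (YWns W) := Subtype.val ⁻¹' ψ.source
  have hUopen : IsOpen U := ψ.open_source.preimage continuous_subtype_val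
  have hxU : (⟨a, ha⟩ : YWns W) ∈ U := haψ
  let O' : Set (LinearMap.ker (f' : V →ₗ[ℝ] (Fin k → ℝ))) := (fun z : LinearMap.ker (f' : V →ₗ[ℝ] (Fin k → ℝ)) => ((0 : Fin k → ℝ), z)) ⁻¹' ψ.target
  have hO'open : IsOpen O' := ψ.open_target.preimage (continuous_const.prodMk continuous_id)
  let O : Set (EuclideanSpace ℝ (Fin (N - k))) := eK '' O'
  have hOopen : IsOpen O := eK.toHomeomorph.isOpenMap _ hO'open
  refine ⟨U, hUopen, hxU, O, hOopen, ?_⟩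
  -- key fact: on YWns points of ψ.source, ψ v = (0, (ψ v).2)
  have hkey : ∀ v : V, v ∈ YWns W → ψ v = ((0 : Fin k → ℝ), (ψ v).2) := by
    intro v hv
    have h1 : (ψ v).1 = f v := hφfst v
    have h2 : f v = 0 := (hf0iff v).2 hv.1
    rw [Prod.ext_iff]
    exact ⟨by rw [h1, h2], rfl⟩
  -- forward map
  have hfwd_mem : ∀ u : U, eK (ψ (u.1 : V)).2 ∈ O := by
    rintro ⟨⟨v, hv⟩, hvU⟩
    refine ⟨(ψ v).2, ?_, rfl⟩
    show ((0 : Fin k → ℝ), (ψ v).2) ∈ ψ.target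
    rw [← hkey v hv]
    exact ψ.map_source hvU
  -- backward map data
  have hbwd : ∀ z : O, ((0 : Fin k → ℝ), eK.symm z.1) ∈ ψ.target := by
    rintro ⟨z, w, hw, rfl⟩
    simpa [O'] using hw
  have hbwd_src : ∀ z : O, ψ.symm ((0 : Fin k → ℝ), eK.symm z.1) ∈ ψ.source :=
    fun z => ψ.map_target (hbwd z)
  have hbwd_YW : ∀ z : O, ψ.symm ((0 : Fin k → ℝ), eK.symm z.1) ∈ YWns W := by
    intro z
    set y := ψ.symm ((0 : Fin k → ℝ), eK.symm z.1) with hy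
    have hyS : y ∈ ψ.source := hbwd_src z
    have hySns : y ∈ Sns := (hψsource ▸ hyS).2
    have hfy : f y = 0 := by
      have h1 : ψ y = ((0 : Fin k → ℝ), eK.symm z.1) := ψ.right_inv (hbwd z)
      have h2 : (ψ y).1 = f y := hφfst y
      rw [h1] at h2
      exact h2.symm
    exact ⟨(hf0iff y).1 hfy, (hNNiff y).2 ((hSns_iff y).1 hySns)⟩
  -- the homeomorphism
  refine ⟨Homeomorph.mk (Equiv.mk
    (fun u => ⟨eK (ψ (u.1 : V)).2, hfwd_mem u⟩)
    (fun z => ⟨⟨ψ.symm ((0 : Fin k → ℝ), eK.symm z.1), hbwd_YW z⟩, hbwd_src z⟩)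
    ?_ ?_) ?_ ?_⟩
  · -- left inverse
    rintro ⟨⟨v, hv⟩, hvU⟩
    apply Subtype.ext
    apply Subtype.ext
    show ψ.symm ((0 : Fin k → ℝ), eK.symm (eK (ψ v).2)) = v
    rw [eK.symm_apply_apply, ← hkey v hv]
    exact ψ.left_inv hvU
  · -- right inverse
    rintro ⟨z, hz⟩
    apply Subtype.ext
    show eK (ψ (ψ.symm ((0 : Fin k → ℝ), eK.symm z))).2 = z
    rw [ψ.right_inv (hbwd ⟨z, hz⟩)]
    exact eK.apply_symm_apply z
  · -- continuity of the forward map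
    apply Continuous.subtype_mk
    apply eK.continuous.comp
    apply continuous_snd.comp
    exact ψ.continuousOn.comp_continuous
      (continuous_subtype_val.comp continuous_subtype_val) (fun u => u.2)
  · -- continuity of the backward map
    apply Continuous.subtype_mk
    apply Continuous.subtype_mk
    exact ψ.symm.continuousOn.comp_continuous
      (continuous_const.prodMk (eK.symm.continuous.comp continuous_subtype_val))
      (fun z => hbwd z)
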